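/- Let G be a connected k-regular finite simple graph with m edges, where k > 2, and let U be its Grover transition matrix. Then the positive support of the square of U satisfies (U²)⁺ = (U⁺)² + I_{2m}. -/

import Mathlib

open Matrix SimpleGraph

variable {V : Type*} [Fintype V] [DecidableEq V]

/-- The Grover transition matrix `U` of a graph `G`, indexed by darts (arcs):
`U e f = 2/deg(t(f)) - 1` if `f = e⁻¹`, `U e f = 2/deg(t(f))` if `t(f) = o(e)` and
`f ≠ e⁻¹`, and `0` otherwise.  (When `t(f) = o(e)` we have `deg (t f) = deg (o e)`.) -/
noncomputable def grover (G : SimpleGraph V) [DecidableRel G.Adj] :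
    Matrix G.Dart G.Dart ℝ := fun e f =>
  if f = e.symm then 2 / (G.degree e.toProd.1) - 1
  else if f.toProd.2 = e.toProd.1 then 2 / (G.degree e.toProd.1) else 0

/-- The positive support of a real square matrix. -/
noncomputable def posSupp {α : Type*} (M : Matrix α α ℝ) : Matrix α α ℝ :=
  fun i j => if 0 < M i j then 1 else 0

/-- The matrix `B` with `B e f = 1` iff `t(e) = o(f)`. -/
def Bmat (G : SimpleGraph V) [DecidableRel G.Adj] : Matrix G.Dart G.Dart ℝ :=
  fun e f => if e.toProd.2 = f.toProd.1 then 1 else 0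

/-- The arc-inversion matrix `J₀` with `(J₀) e f = 1` iff `f = e⁻¹`. -/
def J0 (G : SimpleGraph V) [DecidableRel G.Adj] : Matrix G.Dart G.Dart ℝ :=
  fun e f => if f = e.symm then 1 else 0

/-- The diagonal degree matrix of `G`. -/
noncomputable def degMat (G : SimpleGraph V) [DecidableRel G.Adj] : Matrix V V ℝ :=
  Matrix.diagonal fun v => (G.degree v : ℝ)

/-- The Grover matrix entry vanishes unless the head of `f` is the tail of `e`. -/
lemma grover_eq_zero (G : SimpleGraph V) [DecidableRel G.Adj]
    {e f : G.Dart} (h : f.toProd.2 ≠ e.toProd.1) : grover G e f = 0 := by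
  unfold grover
  rw [if_neg, if_neg h]
  intro hf
  apply h
  rw [hf, SimpleGraph.Dart.symm_toProd]
  rfl

lemma posSupp_grover_eq_zero (G : SimpleGraph V) [DecidableRel G.Adj]
    {e f : G.Dart} (h : f.toProd.2 ≠ e.toProd.1) : posSupp (grover G) e f = 0 := by
  unfold posSupp
  rw [grover_eq_zero G h, if_neg (lt_irrefl 0)]

/-- Godsil–Guo: for a connected `k`-regular graph with `k > 2`,
`(U²)⁺ = (U⁺)² + I_{2m}`. -/
theorem posSupp_grover_sq (G : SimpleGraph V) [DecidableRel G.Adj] (k : ℕ)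
    (hconn : G.Connected) (hreg : G.IsRegularOfDegree k) (hk : 2 < k) :
    posSupp ((grover G) ^ 2) = (posSupp (grover G)) ^ 2 + 1 := by
  have hk' : (2 : ℝ) < (k : ℝ) := by exact_mod_cast hk
  have hkpos : (0 : ℝ) < (k : ℝ) := lt_trans two_pos hk'
  have ha : (0 : ℝ) < 2 / (k : ℝ) := div_pos two_pos hkpos
  have hb : 2 / (k : ℝ) - 1 < 0 := by
    rw [sub_neg]
    exact (div_lt_one hkpos).mpr hk'
  have hdeg : ∀ v : V, ((G.degree v : ℝ)) = (k : ℝ) := fun v => by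
    rw [hreg v]
  funext e g
  have L : ((grover G) ^ 2) e g = ∑ f, grover G e f * grover G f g := by
    rw [pow_two, Matrix.mul_apply]
  have R : ((posSupp (grover G)) ^ 2) e g
      = ∑ f, posSupp (grover G) e f * posSupp (grover G) f g := by
    rw [pow_two, Matrix.mul_apply]
  have key : ∀ f : G.Dart, f.toProd ≠ (g.toProd.2, e.toProd.1) →
      grover G e f * grover G f g = 0 ∧
      posSupp (grover G) e f * posSupp (grover G) f g = 0 := by
    intro f hf
    by_cases h2 : f.toProd.2 = e.toProd.1
    · have h1 : g.toProd.2 ≠ f.toProd.1 := by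
        intro h1
        exact hf (Prod.ext h1.symm h2)
      exact ⟨by rw [grover_eq_zero G h1, mul_zero],
        by rw [posSupp_grover_eq_zero G h1, mul_zero]⟩
    · exact ⟨by rw [grover_eq_zero G h2, zero_mul],
        by rw [posSupp_grover_eq_zero G h2, zero_mul]⟩
  by_cases hadj : G.Adj g.toProd.2 e.toProd.1
  · -- the unique middle dart
    set f₀ : G.Dart := ⟨(g.toProd.2, e.toProd.1), hadj⟩ with hf₀
    have hne : ∀ f : G.Dart, f ≠ f₀ → f.toProd ≠ (g.toProd.2, e.toProd.1) := by
      intro f h hc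
      exact h (SimpleGraph.Dart.ext _ _ hc)
    have hsumL : (∑ f, grover G e f * grover G f g) = grover G e f₀ * grover G f₀ g :=
      Finset.sum_eq_single f₀ (fun f _ h => (key f (hne f h)).1)
        (fun h => absurd (Finset.mem_univ f₀) h)
    have hsumR : (∑ f, posSupp (grover G) e f * posSupp (grover G) f g)
        = posSupp (grover G) e f₀ * posSupp (grover G) f₀ g :=
      Finset.sum_eq_single f₀ (fun f _ h => (key f (hne f h)).2)
        (fun h => absurd (Finset.mem_univ f₀) h)
    have hv1 : grover G e f₀ =
        if g.toProd.2 = e.toProd.2 then 2 / (k : ℝ) - 1 else 2 / (k : ℝ) := by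
      unfold grover
      by_cases h : g.toProd.2 = e.toProd.2
      · rw [if_pos, if_pos h, hdeg]
        apply SimpleGraph.Dart.ext
        rw [SimpleGraph.Dart.symm_toProd]
        exact Prod.ext h rfl
      · rw [if_neg, if_pos rfl, if_neg h, hdeg]
        intro hc
        apply h
        have := congrArg (fun d : G.Dart => d.toProd.1) hc
        simpa using this
    have hv2 : grover G f₀ g =
        if g.toProd.1 = e.toProd.1 then 2 / (k : ℝ) - 1 else 2 / (k : ℝ) := by
      unfold grover
      by_cases h : g.toProd.1 = e.toProd.1
      · rw [if_pos, if_pos h]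
        · rw [hdeg]
        · apply SimpleGraph.Dart.ext
          rw [SimpleGraph.Dart.symm_toProd]
          exact Prod.ext h rfl
      · rw [if_neg, if_pos rfl, if_neg h]
        · rw [hdeg]
        · intro hc
          apply h
          have := congrArg (fun d : G.Dart => d.toProd.1) hc
          simpa [hf₀] using this
    have hp1 : posSupp (grover G) e f₀ =
        if g.toProd.2 = e.toProd.2 then (0:ℝ) else 1 := by
      unfold posSupp
      rw [hv1]
      by_cases h : g.toProd.2 = e.toProd.2
      · rw [if_pos h, if_pos h, if_neg (asymm hb)]
      · rw [if_neg h, if_neg h, if_pos ha]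
    have hp2 : posSupp (grover G) f₀ g =
        if g.toProd.1 = e.toProd.1 then (0:ℝ) else 1 := by
      unfold posSupp
      rw [hv2]
      by_cases h : g.toProd.1 = e.toProd.1
      · rw [if_pos h, if_pos h, if_neg (asymm hb)]
      · rw [if_neg h, if_neg h, if_pos ha]
    have PL : posSupp ((grover G) ^ 2) e g
        = if 0 < ((grover G) ^ 2) e g then (1:ℝ) else 0 := rfl
    rw [PL, L, Matrix.add_apply, R, hsumL, hsumR, hv1, hv2, hp1, hp2, Matrix.one_apply]
    by_cases h1 : g.toProd.2 = e.toProd.2 <;> by_cases h2 : g.toProd.1 = e.toProd.1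
    · have heg : e = g := (SimpleGraph.Dart.ext _ _ (Prod.ext h2 h1)).symm
      rw [if_pos h1, if_pos h2, if_pos h1, if_pos h2, if_pos heg,
        if_pos (mul_pos_of_neg_of_neg hb hb), zero_mul]
      norm_num
    · have heg : e ≠ g := fun h => h2 (by rw [h])
      rw [if_pos h1, if_neg h2, if_pos h1, if_neg h2, if_neg heg,
        if_neg (asymm (mul_neg_of_neg_of_pos hb ha)), zero_mul]
      norm_num
    · have heg : e ≠ g := fun h => h1 (by rw [h])
      rw [if_neg h1, if_pos h2, if_neg h1, if_pos h2, if_neg heg,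
        if_neg (asymm (mul_neg_of_pos_of_neg ha hb)), mul_zero]
      norm_num
    · have heg : e ≠ g := fun h => h1 (by rw [h])
      rw [if_neg h1, if_neg h2, if_neg h1, if_neg h2, if_neg heg,
        if_pos (mul_pos ha ha)]
      norm_num
  · have keyall : ∀ f : G.Dart, f.toProd ≠ (g.toProd.2, e.toProd.1) := by
      intro f hf
      apply hadj
      have := f.adj
      rw [hf] at this
      exact this
    have heg : e ≠ g := by
      intro h
      apply hadj
      rw [← h]
      exact e.adj.symm
    have PL : posSupp ((grover G) ^ 2) e g
        = if 0 < ((grover G) ^ 2) e g then (1:ℝ) else 0 := rfl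
    rw [PL, L, Matrix.add_apply, R, Matrix.one_apply, if_neg heg,
      Finset.sum_eq_zero (fun f _ => (key f (keyall f)).1),
      Finset.sum_eq_zero (fun f _ => (key f (keyall f)).2),
      if_neg (lt_irrefl 0)]
    norm_num
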